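/- Consider ẋ = f(x) on an open set D ⊆ ℝⁿ with f locally Lipschitz, and let h : D → ℝ be twice continuously differentiable. Assume: (i) Λ_δ := {x ∈ D : −δ ≤ h(x) ≤ δ} is compact for every δ ≥ 0; (ii) 0 is a regular value of h, i.e. ∇h(x) ≠ 0 for every x ∈ D with h(x) = 0; and (iii) S = {x ∈ D : h(x) ≥ 0} is positively invariant. Then there exists a locally Lipschitz function μ_L : ℝ → ℝ with μ_L(0) ≤ 0 such that L_f h(x) ≥ −μ_L(h(x)) for all x ∈ D. -/

import Mathlib

set_option maxHeartbeats 1000000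

open Set Metric Filter

/-- Local solution of a time-independent ODE from a local Lipschitz bound. -/
theorem exists_ode_solution' {E : Type*} [NormedAddCommGroup E] [NormedSpace ℝ E]
    [CompleteSpace E] {v : E → E} {x₀ : E} {K : NNReal} {s : Set E} (hs : s ∈ nhds x₀)
    (hlip : LipschitzOnWith K v s) :
    ∃ x : ℝ → E, x 0 = x₀ ∧ ∃ ε > (0:ℝ), ∀ t ∈ Set.Ioo (-ε) ε, HasDerivAt x (v (x t)) t := by
  have hcont : ContinuousAt v x₀ := hlip.continuousOn.continuousAt hs
  obtain ⟨R₁, hR₁, hball⟩ := Metric.mem_nhds_iff.mp hs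
  obtain ⟨R₂, hR₂, hbdd⟩ := Metric.continuousAt_iff.mp hcont.norm 1 zero_lt_one
  have hbdd' : ∀ x ∈ Metric.ball x₀ R₂, ‖v x‖ ≤ 1 + ‖v x₀‖ := fun _ hx =>
    sub_le_iff_le_add.mp <| le_of_lt <| lt_of_abs_lt <| Real.dist_eq _ _ ▸ hbdd hx
  set ε := min R₁ R₂ / 2 / (1 + ‖v x₀‖) with hε
  have hε0 : 0 < ε := hε ▸ div_pos (half_pos <| lt_min hR₁ hR₂)
    (add_pos_of_pos_of_nonneg zero_lt_one (norm_nonneg _))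
  have hpl : IsPicardLindelof (fun _ => v) (tmin := 0 - ε) (tmax := 0 + ε)
      ⟨0, by constructor <;> linarith⟩ x₀ ⟨min R₁ R₂ / 2, by positivity⟩ 0
      ⟨1 + ‖v x₀‖, by positivity⟩ K :=
    { lipschitzOnWith := fun _ _ => hlip.mono <|
        (Metric.closedBall_subset_ball <| half_lt_self <| lt_min hR₁ hR₂).trans <|
        (Metric.ball_subset_ball <| min_le_left _ _).trans hball
      continuousOn := fun _ _ => continuousOn_const
      norm_le := fun _ _ x hx => hbdd' x <| Set.mem_of_mem_of_subset hx <|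
        (Metric.closedBall_subset_ball <| half_lt_self <| lt_min hR₁ hR₂).trans <|
        (Metric.ball_subset_ball <| min_le_right _ _)
      mul_max_le := by
        show (1 + ‖v x₀‖) * max (0 + ε - 0) (0 - (0 - ε)) ≤ min R₁ R₂ / 2 - ((0 : NNReal) : ℝ)
        simp only [NNReal.coe_zero, sub_zero, zero_add, zero_sub, neg_neg, max_self]
        rw [hε, mul_div_left_comm, div_self, mul_one]
        exact ne_of_gt <| add_pos_of_pos_of_nonneg zero_lt_one <| norm_nonneg _ }
  obtain ⟨x, hx1, hx2⟩ := hpl.exists_eq_forall_mem_Icc_hasDerivWithinAt₀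
  refine ⟨x, hx1, ε, hε0, fun t ht => ?_⟩
  have ht' : t ∈ Set.Icc (0 - ε) (0 + ε) := by
    constructor <;> [linarith [ht.1]; linarith [ht.2]]
  exact (hx2 t ht').hasDerivAt (Icc_mem_nhds (by linarith [ht.1]) (by linarith [ht.2]))

theorem bands_shrink' {n : ℕ} {D : Set (EuclideanSpace ℝ (Fin n))} (hD : IsOpen D)
    {h : EuclideanSpace ℝ (Fin n) → ℝ} (hhc : ContinuousOn h D)
    (hcompact : ∀ δ : ℝ, 0 ≤ δ → IsCompact {x ∈ D | -δ ≤ h x ∧ h x ≤ δ})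
    {U : Set (EuclideanSpace ℝ (Fin n))} (hU : IsOpen U)
    (hZU : {x ∈ D | h x = 0} ⊆ U) :
    ∃ δ > (0:ℝ), {x ∈ D | -δ ≤ h x ∧ h x ≤ δ} ⊆ U := by
  by_contra hcon
  push_neg at hcon
  have hex : ∀ k : ℕ, ∃ x, x ∈ {x ∈ D | -(1/(k+1:ℝ)) ≤ h x ∧ h x ≤ 1/(k+1:ℝ)} ∧ x ∉ U := by
    intro k
    have hk : (0:ℝ) < 1/(k+1) := by positivity
    exact Set.not_subset.mp (hcon _ hk)
  choose x hx hxU using hex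
  have hx1 : ∀ k, x k ∈ {x ∈ D | -(1:ℝ) ≤ h x ∧ h x ≤ 1} := by
    intro k
    obtain ⟨hd, h1, h2⟩ := hx k
    have hk1 : 1/(k+1:ℝ) ≤ 1 := by
      rw [div_le_one (by positivity)]; linarith [Nat.cast_nonneg (α := ℝ) k]
    exact ⟨hd, by linarith, by linarith⟩
  obtain ⟨z, hz, φ, hφ, htend⟩ := (hcompact 1 zero_le_one).tendsto_subseq hx1
  have hzD : z ∈ D := hz.1
  have hhz : Filter.Tendsto (fun k => h (x (φ k))) Filter.atTop (nhds (h z)) :=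
    ((hhc.continuousAt (hD.mem_nhds hzD)).tendsto).comp htend
  have hzero : Filter.Tendsto (fun k => h (x (φ k))) Filter.atTop (nhds 0) := by
    have hb : ∀ k, ‖h (x (φ k))‖ ≤ 1/(φ k + 1:ℝ) := by
      intro k
      obtain ⟨_, h1, h2⟩ := hx (φ k)
      rw [Real.norm_eq_abs, abs_le]; exact ⟨h1, h2⟩
    have hg : Filter.Tendsto (fun k : ℕ => 1/(φ k + 1:ℝ)) Filter.atTop (nhds 0) := by
      have h0 : Filter.Tendsto (fun m : ℕ => 1/(m+1:ℝ)) Filter.atTop (nhds 0) :=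
        tendsto_one_div_add_atTop_nhds_zero_nat
      exact h0.comp hφ.tendsto_atTop
    exact squeeze_zero_norm hb hg
  have hz0 : h z = 0 := tendsto_nhds_unique hhz hzero
  have hzU : z ∈ U := hZU ⟨hzD, hz0⟩
  have : z ∈ Uᶜ := hU.isClosed_compl.mem_of_tendsto htend
    (Filter.Eventually.of_forall (fun k => hxU (φ k)))
  exact this hzU

theorem uniform_loclip' {E : Type*} [MetricSpace E] {f : E → E} {C : Set E} (hC : IsCompact C)
    (hf : ∀ x ∈ C, ∃ K : NNReal, ∃ s ∈ nhds x, LipschitzOnWith K f s) :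
    ∃ ρ > (0:ℝ), ∃ K : ℝ, 0 ≤ K ∧ ∀ x ∈ C, ∀ y ∈ C, dist x y < ρ →
      dist (f x) (f y) ≤ K * dist x y := by
  choose K s hs hlip using hf
  have hr : ∀ z (hz : z ∈ C), ∃ r > (0:ℝ), Metric.ball z r ⊆ s z hz := by
    intro z hz
    obtain ⟨r, hr, hball⟩ := Metric.mem_nhds_iff.mp (hs z hz)
    exact ⟨r, hr, hball⟩
  choose r hrpos hrball using hr
  -- finite subcover
  obtain ⟨t, hcover⟩ := hC.elim_nhds_subcover'
    (fun z hz => Metric.ball z (r z hz)) (fun z hz => Metric.ball_mem_nhds z (hrpos z hz))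
  -- Lebesgue number for the finite cover
  obtain ⟨ρ, hρ, hleb⟩ := lebesgue_number_lemma_of_metric hC
    (fun i : t => Metric.isOpen_ball (x := (i.1:E)) (ε := r i.1 i.1.2)) (by
      intro x hx
      obtain ⟨z, hzt, hzball⟩ := Set.mem_iUnion₂.mp (hcover hx)
      exact Set.mem_iUnion.mpr ⟨⟨z, hzt⟩, hzball⟩)
  classical
  set Kmax : NNReal := t.sup (fun i => K i.1 i.2) with hKmax
  refine ⟨ρ, hρ, Kmax, Kmax.coe_nonneg, fun x hx y hy hxy => ?_⟩
  obtain ⟨i, hi⟩ := hleb x hx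
  have hxball : x ∈ Metric.ball (i.1 : E) (r i.1 i.1.2) := hi (Metric.mem_ball_self hρ)
  have hyball : y ∈ Metric.ball (i.1 : E) (r i.1 i.1.2) := hi (by
    rw [Metric.mem_ball, dist_comm]; exact hxy)
  have hlipb : LipschitzOnWith (K i.1 i.1.2) f (Metric.ball (i.1 : E) (r i.1 i.1.2)) :=
    (hlip i.1 i.1.2).mono (hrball i.1 i.1.2)
  have h1 : dist (f x) (f y) ≤ (K i.1 i.1.2) * dist x y :=
    hlipb.dist_le_mul x hxball y hyball
  have h2 : (K i.1 i.1.2 : ℝ) ≤ (Kmax : ℝ) := by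
    exact_mod_cast Finset.le_sup (f := fun j : C => K j.1 j.2) i.2
  exact h1.trans (by gcongr)

theorem nagumo' {n : ℕ} {D : Set (EuclideanSpace ℝ (Fin n))} (hD : IsOpen D)
    {f : EuclideanSpace ℝ (Fin n) → EuclideanSpace ℝ (Fin n)}
    (hf : ∀ x ∈ D, ∃ K : NNReal, ∃ s ∈ nhds x, LipschitzOnWith K f s)
    {h : EuclideanSpace ℝ (Fin n) → ℝ} (hh : ContDiffOn ℝ 2 h D)
    (hinv : ∀ (τ : ℝ) (x : ℝ → EuclideanSpace ℝ (Fin n)),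
      (∀ t ∈ Set.Ico (0 : ℝ) τ, x t ∈ D) →
      (∀ t ∈ Set.Ico (0 : ℝ) τ, HasDerivAt x (f (x t)) t) →
      0 ≤ h (x 0) →
      ∀ t ∈ Set.Ico (0 : ℝ) τ, 0 ≤ h (x t))
    {z : EuclideanSpace ℝ (Fin n)} (hz : z ∈ D) (hz0 : h z = 0) :
    0 ≤ fderiv ℝ h z (f z) := by
  obtain ⟨K, s, hs, hlip⟩ := hf z hz
  obtain ⟨x, hx0, ε, hε, hode⟩ := exists_ode_solution' hs hlip
  have h0mem : (0:ℝ) ∈ Set.Ioo (-ε) ε := ⟨by linarith, hε⟩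
  have hc : ContinuousAt x 0 := (hode 0 h0mem).continuousAt
  have hD0 : x ⁻¹' D ∈ nhds (0:ℝ) := hc.preimage_mem_nhds (hD.mem_nhds (hx0 ▸ hz))
  obtain ⟨τ, hτ, hball⟩ := Metric.mem_nhds_iff.mp hD0
  set τ' := min τ ε with hτ'def
  have hτ'0 : 0 < τ' := lt_min hτ hε
  have hmemIoo : ∀ t ∈ Set.Ico (0:ℝ) τ', t ∈ Set.Ioo (-ε) ε := fun t ht =>
    ⟨by linarith [ht.1], lt_of_lt_of_le ht.2 (min_le_right _ _)⟩
  have hmemD : ∀ t ∈ Set.Ico (0:ℝ) τ', x t ∈ D := by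
    intro t ht
    apply hball
    rw [Metric.mem_ball, Real.dist_eq, sub_zero, abs_of_nonneg ht.1]
    exact lt_of_lt_of_le ht.2 (min_le_left _ _)
  have hder : ∀ t ∈ Set.Ico (0:ℝ) τ', HasDerivAt x (f (x t)) t := fun t ht =>
    hode t (hmemIoo t ht)
  have hpos : ∀ t ∈ Set.Ico (0:ℝ) τ', 0 ≤ h (x t) :=
    hinv τ' x hmemD hder (by rw [hx0, hz0])
  -- derivative of h ∘ x at 0
  have hdiff : DifferentiableAt ℝ h z :=
    (hh.contDiffAt (hD.mem_nhds hz)).differentiableAt (by norm_num)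
  have hF : HasFDerivAt h (fderiv ℝ h z) (x 0) := by rw [hx0]; exact hdiff.hasFDerivAt
  have hψ : HasDerivAt (fun t => h (x t)) (fderiv ℝ h z (f z)) 0 := by
    have := hF.comp_hasDerivAt 0 (hode 0 h0mem)
    rwa [hx0] at this
  by_contra hneg
  push_neg at hneg
  have hslope := hasDerivAt_iff_tendsto_slope.mp hψ
  have h1 : Filter.Tendsto (slope (fun t => h (x t)) 0) (nhdsWithin 0 (Set.Ioi 0))
      (nhds (fderiv ℝ h z (f z))) :=
    hslope.mono_left (nhdsWithin_mono _ (fun t ht => ne_of_gt ht))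
  have h2 : ∀ᶠ t in nhdsWithin 0 (Set.Ioi (0:ℝ)), slope (fun t => h (x t)) 0 t < 0 :=
    h1.eventually_lt_const hneg
  have h3 : Set.Ioo (0:ℝ) τ' ∈ nhdsWithin 0 (Set.Ioi (0:ℝ)) :=
    Ioo_mem_nhdsGT hτ'0
  obtain ⟨t, hst, htIoo⟩ := (h2.and (Filter.eventually_mem_set.mpr h3)).exists
  have ht0 : (0:ℝ) < t := htIoo.1
  have hslope_nonneg : 0 ≤ slope (fun t => h (x t)) 0 t := by
    rw [slope_def_field]
    have hnum : 0 ≤ h (x t) := hpos t ⟨le_of_lt ht0, htIoo.2⟩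
    have : h (x 0) = 0 := by rw [hx0, hz0]
    rw [this]
    have : (h (x t) - 0) / (t - 0) = h (x t) / t := by ring_nf
    simpa [this] using div_nonneg hnum (le_of_lt ht0)
  linarith

theorem key_bound' {n : ℕ} {D : Set (EuclideanSpace ℝ (Fin n))} (hD : IsOpen D)
    {f : EuclideanSpace ℝ (Fin n) → EuclideanSpace ℝ (Fin n)}
    (hf : ∀ x ∈ D, ∃ K : NNReal, ∃ s ∈ nhds x, LipschitzOnWith K f s)
    {h : EuclideanSpace ℝ (Fin n) → ℝ} (hh : ContDiffOn ℝ 2 h D)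
    (hcompact : ∀ δ : ℝ, 0 ≤ δ → IsCompact {x ∈ D | -δ ≤ h x ∧ h x ≤ δ})
    (hreg : ∀ x ∈ D, h x = 0 → fderiv ℝ h x ≠ 0)
    (hnag : ∀ z ∈ D, h z = 0 → 0 ≤ fderiv ℝ h z (f z)) :
    ∃ δ₂ > (0:ℝ), ∃ L : ℝ, 0 ≤ L ∧
      ∀ x ∈ D, |h x| ≤ δ₂ → -(fderiv ℝ h x (f x)) ≤ L * |h x| := by
  have hhc : ContinuousOn h D := hh.continuousOn
  set Z := {x ∈ D | h x = 0} with hZdef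
  rcases Set.eq_empty_or_nonempty Z with hZe | hZne
  · obtain ⟨δ, hδ, hsub⟩ := bands_shrink' hD hhc hcompact isOpen_empty
      (by rw [← hZdef, hZe])
    refine ⟨δ, hδ, 0, le_refl 0, fun x hx hxh => ?_⟩
    exact absurd (hsub ⟨hx, (abs_le.mp hxh).1, (abs_le.mp hxh).2⟩) (Set.notMem_empty x)
  have hZD : Z ⊆ D := fun z hz => hz.1
  have hZcomp : IsCompact Z := by
    have : Z = {x ∈ D | -(0:ℝ) ≤ h x ∧ h x ≤ 0} := by
      ext z; simp only [hZdef, Set.mem_setOf_eq, neg_zero]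
      exact ⟨fun ⟨h1, h2⟩ => ⟨h1, le_of_eq h2.symm, le_of_eq h2⟩,
        fun ⟨h1, h2, h3⟩ => ⟨h1, le_antisymm h3 h2⟩⟩
    rw [this]; exact hcompact 0 le_rfl
  -- compact thickening inside D
  obtain ⟨ρ₀, hρ₀, hthick⟩ := hZcomp.exists_cthickening_subset_open hD hZD
  set C := Metric.cthickening ρ₀ Z with hCdef
  have hCcomp : IsCompact C := hZcomp.cthickening
  have hCD : C ⊆ D := hthick
  -- continuity facts
  have hfd : ContinuousOn (fderiv ℝ h) D :=
    hh.continuousOn_fderiv_of_isOpen hD (by norm_num)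
  have hfc : ContinuousOn f D := by
    intro x hx
    obtain ⟨K, s, hs, hlip⟩ := hf x hx
    exact (hlip.continuousOn.continuousAt hs).continuousWithinAt
  -- gradient lower bound c on Z
  obtain ⟨y₀, hy₀Z, hy₀min⟩ := hZcomp.exists_isMinOn hZne (hfd.mono hZD).norm
  set c := ‖fderiv ℝ h y₀‖ / 2 with hcdef
  have hc0 : 0 < c := by
    have := hreg y₀ (hZD hy₀Z) hy₀Z.2
    have : 0 < ‖fderiv ℝ h y₀‖ := norm_pos_iff.mpr this
    positivity
  have hZc : ∀ z ∈ Z, c < ‖fderiv ℝ h z‖ := by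
    intro z hz
    have h1 : ‖fderiv ℝ h y₀‖ ≤ ‖fderiv ℝ h z‖ := hy₀min hz
    have : c < ‖fderiv ℝ h y₀‖ := by rw [hcdef]; linarith [hc0]
    linarith
  -- band inside the region of large gradient
  set U₀ := D ∩ (fun x => ‖fderiv ℝ h x‖) ⁻¹' Set.Ioi c with hU₀def
  have hU₀open : IsOpen U₀ := hfd.norm.isOpen_inter_preimage hD isOpen_Ioi
  have hZU₀ : Z ⊆ U₀ := fun z hz => ⟨hZD hz, hZc z hz⟩
  obtain ⟨δa, hδa, hΛaU⟩ := bands_shrink' hD hhc hcompact hU₀open hZU₀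
  set Λa := {x ∈ D | -δa ≤ h x ∧ h x ≤ δa} with hΛadef
  have hΛacomp : IsCompact Λa := hcompact δa hδa.le
  -- uniform Lipschitz constant for f near Z
  obtain ⟨ρ₁, hρ₁, K₂, hK₂0, hK₂⟩ := uniform_loclip' hCcomp (fun x hx => hf x (hCD hx))
  -- bound on the second derivative on C
  have hfd1 : ContDiffOn ℝ 1 (fderiv ℝ h) D := hh.fderiv_of_isOpen hD (by norm_num)
  have hfd2c : ContinuousOn (fderiv ℝ (fderiv ℝ h)) D :=
    hfd1.continuousOn_fderiv_of_isOpen hD le_rfl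
  obtain ⟨K₁, hK₁⟩ := hCcomp.exists_bound_of_continuousOn (f := fderiv ℝ (fderiv ℝ h)) (hfd2c.mono hCD)
  obtain ⟨B₁, hB₁⟩ := hCcomp.exists_bound_of_continuousOn (hfd.mono hCD)
  obtain ⟨B₂, hB₂⟩ := hCcomp.exists_bound_of_continuousOn (hfc.mono hCD)
  set K₁' := max K₁ 0 with hK₁'def
  set B₁' := max B₁ 0 with hB₁'def
  set B₂' := max B₂ 0 with hB₂'def
  set ρ := min ρ₀ ρ₁ with hρdef
  have hρpos : 0 < ρ := lt_min hρ₀ hρ₁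
  set δ₂ := min (δa / 2) (c * ρ / 4) with hδ₂def
  have hδ₂pos : 0 < δ₂ := lt_min (by linarith) (by positivity)
  set M := B₁' * K₂ + K₁' * B₂' with hMdef
  have hM0 : 0 ≤ M := by
    have h1 : 0 ≤ B₁' := le_max_right _ _
    have h2 : 0 ≤ K₁' := le_max_right _ _
    have h3 : 0 ≤ B₂' := le_max_right _ _
    positivity
  set L := M * (2 / c) with hLdef
  have hL0 : 0 ≤ L := by positivity
  refine ⟨δ₂, hδ₂pos, L, hL0, ?_⟩
  intro x hxD hxh
  have hxa : x ∈ Λa := by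
    refine ⟨hxD, ?_, ?_⟩
    · have := (abs_le.mp hxh).1; have h2 : δ₂ ≤ δa / 2 := min_le_left _ _; linarith
    · have := (abs_le.mp hxh).2; have h2 : δ₂ ≤ δa / 2 := min_le_left _ _; linarith
  -- minimize the penalized functional
  set F := fun z => |h z| + c / 2 * dist x z with hFdef
  have hFc : ContinuousOn F Λa := by
    apply ContinuousOn.add
    · exact (hhc.mono (fun z hz => hz.1)).abs
    · exact continuousOn_const.mul (continuous_const.dist continuous_id).continuousOn
  obtain ⟨y, hyΛ, hymin⟩ := hΛacomp.exists_isMinOn ⟨x, hxa⟩ hFc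
  have hFyx : F y ≤ F x := hymin hxa
  have hFx : F x = |h x| := by simp [hFdef]
  have hdist0 : 0 ≤ c / 2 * dist x y := by positivity
  have hhy : |h y| ≤ |h x| := by
    have : |h y| + c / 2 * dist x y ≤ |h x| := hFx ▸ hFyx
    linarith
  have hdxy : dist x y ≤ 2 / c * |h x| := by
    have h1 : |h y| + c / 2 * dist x y ≤ |h x| := hFx ▸ hFyx
    have h2 : 0 ≤ |h y| := abs_nonneg _
    have h3 : c / 2 * dist x y ≤ |h x| := by linarith
    have h4 : 2 / c * (c / 2 * dist x y) = dist x y := by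
      have hcne : c ≠ 0 := ne_of_gt hc0
      field_simp
    have h5 : 2 / c * (c / 2 * dist x y) ≤ 2 / c * |h x| := by
      apply mul_le_mul_of_nonneg_left h3; positivity
    linarith
  have hyD : y ∈ D := hyΛ.1
  -- the minimizer lies on the zero level set
  have hy0 : h y = 0 := by
    by_contra hy0
    have hyU : c < ‖fderiv ℝ h y‖ := (hΛaU hyΛ).2
    obtain ⟨v, hv1, hvc⟩ := (fderiv ℝ h y).exists_lt_apply_of_lt_opNorm hyU
    set u := if 0 < fderiv ℝ h y v then v else -v with hudef
    have hu1 : ‖u‖ < 1 := by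
      rw [hudef]; split <;> simpa
    have huc : c < fderiv ℝ h y u := by
      rw [hudef]; split
      · next hsgn => rwa [Real.norm_eq_abs, abs_of_pos hsgn] at hvc
      · next hsgn =>
          push_neg at hsgn
          rw [map_neg]
          rwa [Real.norm_eq_abs, abs_of_nonpos hsgn] at hvc
    set sgn : ℝ := if 0 < h y then 1 else -1 with hsgndef
    have hsgn2 : sgn * sgn = 1 := by rw [hsgndef]; split <;> norm_num
    set w := (-sgn) • u with hwdef
    have hw1 : ‖w‖ < 1 := by
      rw [hwdef, norm_smul]
      have : ‖-sgn‖ = 1 := by rw [hsgndef]; split <;> simp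
      rw [this, one_mul]; exact hu1
    have hφw : sgn * (fderiv ℝ h y w) < -c := by
      have he : fderiv ℝ h y w = (-sgn) * fderiv ℝ h y u := by
        rw [hwdef, map_smul]; simp
      rw [he]
      nlinarith [huc, hsgn2]
    set γ := fun t : ℝ => y + t • w with hγdef
    have hγ : ∀ t, HasDerivAt γ w t := by
      intro t
      have := ((hasDerivAt_id t).smul_const w).const_add y
      simpa [hγdef] using this
    have hγ0 : γ 0 = y := by simp [hγdef]
    have hdiffy : DifferentiableAt ℝ h y :=
      (hh.contDiffAt (hD.mem_nhds hyD)).differentiableAt (by norm_num)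
    have hχ : HasDerivAt (fun t => sgn * h (γ t)) (sgn * fderiv ℝ h y w) 0 := by
      have hFy : HasFDerivAt h (fderiv ℝ h y) (γ 0) := by
        rw [hγ0]; exact hdiffy.hasFDerivAt
      exact (hFy.comp_hasDerivAt 0 (hγ 0)).const_mul sgn
    have hχ0 : sgn * h (γ 0) = |h y| := by
      rw [hγ0, hsgndef]
      split
      · next h0 => rw [abs_of_pos h0, one_mul]
      · next h0 =>
          push_neg at h0
          rw [abs_of_neg (lt_of_le_of_ne h0 hy0), neg_one_mul]
    have habs : 0 < |h y| := abs_pos.mpr hy0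
    -- eventual statements as t → 0⁺
    have hslope := hasDerivAt_iff_tendsto_slope.mp hχ
    have e1 : ∀ᶠ t in nhdsWithin 0 (Set.Ioi (0:ℝ)),
        slope (fun t => sgn * h (γ t)) 0 t < -c / 2 :=
      (hslope.mono_left (nhdsWithin_mono _ (fun t ht => ne_of_gt ht))).eventually_lt_const
        (by linarith)
    have hχ0' : (fun t : ℝ => sgn * h (γ t)) 0 = |h y| := hχ0
    have e2 : ∀ᶠ t in nhds (0:ℝ), 0 < sgn * h (γ t) :=
      hχ.continuousAt.eventually_const_lt (lt_of_lt_of_eq habs hχ0'.symm)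
    have e3 : ∀ᶠ t in nhds (0:ℝ), γ t ∈ D := by
      have hc' : ContinuousAt γ 0 := (hγ 0).continuousAt
      have := hc'.preimage_mem_nhds (hD.mem_nhds (hγ0 ▸ hyD))
      exact eventually_mem_set.mpr this
    have e4 : ∀ᶠ t in nhds (0:ℝ), sgn * h (γ t) < δa := by
      apply hχ.continuousAt.eventually_lt_const
      rw [hχ0']
      have h2 : δ₂ ≤ δa / 2 := min_le_left _ _
      calc |h y| ≤ |h x| := hhy
      _ ≤ δ₂ := hxh
      _ < δa := by linarith
    have e234 : ∀ᶠ t in nhdsWithin 0 (Set.Ioi (0:ℝ)),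
        0 < sgn * h (γ t) ∧ γ t ∈ D ∧ sgn * h (γ t) < δa :=
      (e2.and (e3.and e4)).filter_mono nhdsWithin_le_nhds
    have e5 : ∀ᶠ t in nhdsWithin 0 (Set.Ioi (0:ℝ)), t ∈ Set.Ioi (0:ℝ) :=
      eventually_mem_nhdsWithin
    have eall := (e1.and e234).and e5
    obtain ⟨t, ⟨hts, ht2, ht3, ht4⟩, ht0⟩ := eall.exists
    have ht0' : (0:ℝ) < t := ht0
    -- χ decreases strictly faster than the penalty grows
    have hdec : sgn * h (γ t) < |h y| - c / 2 * t := by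
      have hs := hts
      rw [slope_def_field] at hs
      simp only [sub_zero] at hs
      rw [hχ0] at hs
      have h6 := (div_lt_iff₀ ht0').mp hs
      linarith
    have habsγ : |h (γ t)| = sgn * h (γ t) := by
      have h7 : |sgn * h (γ t)| = sgn * h (γ t) := abs_of_pos ht2
      have h8 : |sgn| = 1 := by rw [hsgndef]; split <;> simp
      rw [← h7, abs_mul, h8, one_mul]
    have hγΛ : γ t ∈ Λa := by
      refine ⟨ht3, ?_, ?_⟩
      · have : |h (γ t)| < δa := by rw [habsγ]; exact ht4
        linarith [(abs_le.mp this.le).1]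
      · have : |h (γ t)| < δa := by rw [habsγ]; exact ht4
        linarith [(abs_le.mp this.le).2]
    have hdyγ : dist y (γ t) ≤ t := by
      rw [hγdef]
      simp only [dist_eq_norm]
      have : y - (y + t • w) = -(t • w) := by abel
      rw [this, norm_neg, norm_smul, Real.norm_eq_abs, abs_of_pos ht0']
      nlinarith [norm_nonneg w, hw1]
    have hFγ : F (γ t) < F y := by
      have h9 : dist x (γ t) ≤ dist x y + dist y (γ t) := dist_triangle _ _ _
      have h10 : F (γ t) = |h (γ t)| + c / 2 * dist x (γ t) := rfl
      rw [h10, habsγ]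
      have h11 : c / 2 * dist x (γ t) ≤ c / 2 * (dist x y + t) := by
        apply mul_le_mul_of_nonneg_left _ (by positivity)
        linarith [hdyγ]
      have h12 : F y = |h y| + c / 2 * dist x y := rfl
      rw [h12]
      nlinarith [hdec]
    exact absurd (hymin hγΛ) (not_le.mpr hFγ)
  -- assemble the Lipschitz-type estimate
  have hyZ : y ∈ Z := ⟨hyD, hy0⟩
  have hdρ : dist x y ≤ ρ / 2 := by
    have h1 : 2 / c * |h x| ≤ 2 / c * (c * ρ / 4) := by
      apply mul_le_mul_of_nonneg_left (hxh.trans (min_le_right _ _)); positivity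
    have h2 : 2 / c * (c * ρ / 4) = ρ / 2 := by field_simp; ring
    linarith [hdxy, h1, h2.symm ▸ h1]
  have hxC : x ∈ C := Metric.mem_cthickening_of_dist_le x y ρ₀ Z hyZ
    (hdρ.trans (by have := min_le_left ρ₀ ρ₁; rw [hρdef] at *; linarith))
  have hyC : y ∈ C := Metric.self_subset_cthickening Z hyZ
  have hfp : dist (f x) (f y) ≤ K₂ * dist x y := by
    apply hK₂ x hxC y hyC
    calc dist x y ≤ ρ / 2 := hdρ
    _ < ρ := by linarith
    _ ≤ ρ₁ := min_le_right _ _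
  have hseg : segment ℝ y x ⊆ C := by
    intro p hp
    obtain ⟨a, b, ha, hb, hab, rfl⟩ := hp
    apply Metric.mem_cthickening_of_dist_le _ y ρ₀ Z hyZ
    have he : a • y + b • x - y = b • (x - y) := by
      have h1 : a = 1 - b := by linarith
      rw [h1, sub_smul, one_smul, smul_sub]
      abel
    have hd : dist (a • y + b • x) y ≤ dist x y := by
      rw [dist_eq_norm, he, norm_smul, Real.norm_eq_abs, abs_of_nonneg hb]
      rw [show ‖x - y‖ = dist x y from (dist_eq_norm x y).symm]
      nlinarith [dist_nonneg (x := x) (y := y)]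
    refine hd.trans (hdρ.trans ?_)
    have h1 : ρ ≤ ρ₀ := min_le_left _ _
    linarith
  have hdiffC : ∀ p ∈ segment ℝ y x, DifferentiableAt ℝ (fderiv ℝ h) p := fun p hp =>
    (hfd1.contDiffAt (hD.mem_nhds (hCD (hseg hp)))).differentiableAt one_ne_zero
  have hpair : ‖fderiv ℝ h x - fderiv ℝ h y‖ ≤ K₁' * ‖x - y‖ :=
    Convex.norm_image_sub_le_of_norm_fderiv_le hdiffC
      (fun p hp => (hK₁ p (hseg hp)).trans (le_max_left _ _))
      (convex_segment y x) (left_mem_segment ℝ y x) (right_mem_segment ℝ y x)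
  have hgx : |fderiv ℝ h x (f x) - fderiv ℝ h y (f y)| ≤ M * dist x y := by
    have he : fderiv ℝ h x (f x) - fderiv ℝ h y (f y)
        = fderiv ℝ h x (f x - f y) + (fderiv ℝ h x - fderiv ℝ h y) (f y) := by
      rw [map_sub, ContinuousLinearMap.sub_apply]; ring
    rw [← Real.norm_eq_abs, he]
    have h1 : ‖fderiv ℝ h x (f x - f y)‖ ≤ B₁' * (K₂ * dist x y) := by
      calc ‖fderiv ℝ h x (f x - f y)‖ ≤ ‖fderiv ℝ h x‖ * ‖f x - f y‖ :=
        (fderiv ℝ h x).le_opNorm _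
      _ ≤ B₁' * (K₂ * dist x y) := by
          apply mul_le_mul ((hB₁ x hxC).trans (le_max_left _ _)) _ (norm_nonneg _)
            (le_max_right _ _)
          rw [← dist_eq_norm]; exact hfp
    have h2 : ‖(fderiv ℝ h x - fderiv ℝ h y) (f y)‖ ≤ K₁' * dist x y * B₂' := by
      calc ‖(fderiv ℝ h x - fderiv ℝ h y) (f y)‖
          ≤ ‖fderiv ℝ h x - fderiv ℝ h y‖ * ‖f y‖ :=
        (fderiv ℝ h x - fderiv ℝ h y).le_opNorm _
      _ ≤ K₁' * dist x y * B₂' := by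
          refine mul_le_mul ?_ ((hB₂ y hyC).trans (le_max_left _ _)) (norm_nonneg _) ?_
          · rw [show dist x y = ‖x - y‖ from dist_eq_norm x y]; exact hpair
          · exact mul_nonneg (le_max_right _ _) dist_nonneg
    calc ‖fderiv ℝ h x (f x - f y) + (fderiv ℝ h x - fderiv ℝ h y) (f y)‖
        ≤ ‖fderiv ℝ h x (f x - f y)‖ + ‖(fderiv ℝ h x - fderiv ℝ h y) (f y)‖ :=
      norm_add_le _ _
    _ ≤ B₁' * (K₂ * dist x y) + K₁' * dist x y * B₂' := add_le_add h1 h2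
    _ = M * dist x y := by rw [hMdef]; ring
  have hgy : 0 ≤ fderiv ℝ h y (f y) := hnag y hyD hy0
  have habs2 := (abs_le.mp hgx).1
  have hMd : M * dist x y ≤ M * (2 / c * |h x|) := mul_le_mul_of_nonneg_left hdxy hM0
  have hLeq : L * |h x| = M * (2 / c * |h x|) := by rw [hLdef]; ring
  have t1 : -((fderiv ℝ h x) (f x)) ≤ M * dist x y := by linarith
  exact t1.trans (hMd.trans (le_of_eq hLeq.symm))

/-- Theorem 3: for `f` locally Lipschitz on open `D`, `h` twice continuously
differentiable with all sublevel bands `Λ_δ = {x ∈ D : −δ ≤ h(x) ≤ δ}` compact, `0` a regular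
value of `h`, and `S = {x ∈ D : h(x) ≥ 0}` positively invariant, there exists a locally
Lipschitz `μ_L` with `μ_L(0) ≤ 0` and `L_f h(x) ≥ −μ_L(h(x))` on `D`. -/
theorem exists_locallyLipschitz_comparison
    {n : ℕ} (D : Set (EuclideanSpace ℝ (Fin n))) (hD : IsOpen D)
    (f : EuclideanSpace ℝ (Fin n) → EuclideanSpace ℝ (Fin n))
    (hf : ∀ x ∈ D, ∃ K : NNReal, ∃ s ∈ nhds x, LipschitzOnWith K f s)
    (h : EuclideanSpace ℝ (Fin n) → ℝ) (hh : ContDiffOn ℝ 2 h D)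
    (hcompact : ∀ δ : ℝ, 0 ≤ δ → IsCompact {x ∈ D | -δ ≤ h x ∧ h x ≤ δ})
    (hreg : ∀ x ∈ D, h x = 0 → fderiv ℝ h x ≠ 0)
    (hinv : ∀ (τ : ℝ) (x : ℝ → EuclideanSpace ℝ (Fin n)),
      (∀ t ∈ Set.Ico (0 : ℝ) τ, x t ∈ D) →
      (∀ t ∈ Set.Ico (0 : ℝ) τ, HasDerivAt x (f (x t)) t) →
      0 ≤ h (x 0) →
      ∀ t ∈ Set.Ico (0 : ℝ) τ, 0 ≤ h (x t)) :
    ∃ μL : ℝ → ℝ, LocallyLipschitz μL ∧ μL 0 ≤ 0 ∧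
      ∀ x ∈ D, -μL (h x) ≤ fderiv ℝ h x (f x) := by
  have hnag : ∀ z ∈ D, h z = 0 → 0 ≤ fderiv ℝ h z (f z) := fun z hz hz0 =>
    nagumo' hD hf hh hinv hz hz0
  obtain ⟨δ₂, hδ₂, L, hL0, hkey⟩ := key_bound' hD hf hh hcompact hreg hnag
  set g := fun x => fderiv ℝ h x (f x) with hgdef
  set p := fun x => -(g x) - L * |h x| with hpdef
  set Λ := fun s : ℝ => {x ∈ D | -s ≤ h x ∧ h x ≤ s} with hΛdef
  have hfd : ContinuousOn (fderiv ℝ h) D :=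
    hh.continuousOn_fderiv_of_isOpen hD (by norm_num)
  have hfc : ContinuousOn f D := by
    intro x hx
    obtain ⟨K, s, hs, hlip⟩ := hf x hx
    exact (hlip.continuousOn.continuousAt hs).continuousWithinAt
  have hgc : ContinuousOn g D := hfd.clm_apply hfc
  have hpc : ContinuousOn p D := (hgc.neg).sub (continuousOn_const.mul hh.continuousOn.abs)
  have hΛsub : ∀ s, Λ s ⊆ D := fun s x hx => hx.1
  have hΛmono : ∀ {s₁ s₂ : ℝ}, s₁ ≤ s₂ → Λ s₁ ⊆ Λ s₂ := fun {s₁ s₂} h12 x hx =>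
    ⟨hx.1, le_trans (neg_le_neg h12) hx.2.1, hx.2.2.trans h12⟩
  have hΛbdd : ∀ s : ℝ, BddAbove (p '' Λ s) := by
    intro s
    rcases le_or_gt 0 s with hs | hs
    · exact ((hcompact s hs).image_of_continuousOn (hpc.mono (hΛsub s))).bddAbove
    · have he : Λ s = ∅ := by
        ext x
        simp only [hΛdef, Set.mem_setOf_eq, Set.mem_empty_iff_false, iff_false, not_and]
        intro _ h1
        intro h2
        linarith
      rw [he]; simp
  set q := fun s : ℝ => sSup (insert (0:ℝ) (p '' Λ s)) with hqdef
  have hq0 : ∀ s, 0 ≤ q s := fun s =>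
    le_csSup ((hΛbdd s).insert 0) (Set.mem_insert 0 _)
  have hqmono : Monotone q := fun s₁ s₂ h12 => csSup_le_csSup ((hΛbdd s₂).insert 0)
    (Set.insert_nonempty 0 _) (Set.insert_subset_insert (Set.image_mono (hΛmono h12)))
  have hqsmall : ∀ s ≤ δ₂, q s = 0 := by
    intro s hs
    refine le_antisymm (csSup_le (Set.insert_nonempty 0 _) ?_) (hq0 s)
    rintro a (rfl | ⟨x, hx, rfl⟩)
    · exact le_rfl
    · have hx2 : x ∈ Λ δ₂ := hΛmono hs hx
      have hb : |h x| ≤ δ₂ := abs_le.mpr ⟨hx2.2.1, hx2.2.2⟩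
      have := hkey x hx2.1 hb
      simp only [hpdef]
      linarith
  have hqmem : ∀ x ∈ D, p x ≤ q (|h x|) := fun x hx =>
    le_csSup ((hΛbdd _).insert 0)
      (Set.mem_insert_of_mem _ ⟨x, ⟨hx, neg_abs_le _, le_abs_self _⟩, rfl⟩)
  have hqint : ∀ a b : ℝ, IntervalIntegrable q MeasureTheory.volume a b := fun a b =>
    hqmono.intervalIntegrable
  set μL := fun r : ℝ => L * |r| + δ₂⁻¹ * ∫ s in |r|..(|r| + δ₂), q s with hμdef
  have hIbound : ∀ u u' : ℝ, 0 ≤ u → u ≤ u' →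
      |(∫ s in u'..(u' + δ₂), q s) - ∫ s in u..(u + δ₂), q s| ≤ q (u' + δ₂) * (u' - u) := by
    intro u u' hu huu
    have hQ : ∀ s ∈ Set.Icc u (u' + δ₂), q s ≤ q (u' + δ₂) := fun s hs => hqmono hs.2
    have e1 : (∫ s in u..(u + δ₂), q s) + ∫ s in (u + δ₂)..(u' + δ₂), q s
        = ∫ s in u..(u' + δ₂), q s :=
      intervalIntegral.integral_add_adjacent_intervals (hqint _ _) (hqint _ _)
    have e2 : (∫ s in u..u', q s) + ∫ s in u'..(u' + δ₂), q s
        = ∫ s in u..(u' + δ₂), q s :=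
      intervalIntegral.integral_add_adjacent_intervals (hqint _ _) (hqint _ _)
    have hI1pos : 0 ≤ ∫ s in u..u', q s :=
      intervalIntegral.integral_nonneg huu (fun s _ => hq0 s)
    have hI2pos : 0 ≤ ∫ s in (u + δ₂)..(u' + δ₂), q s :=
      intervalIntegral.integral_nonneg (by linarith) (fun s _ => hq0 s)
    have hI1le : (∫ s in u..u', q s) ≤ q (u' + δ₂) * (u' - u) := by
      have := intervalIntegral.integral_mono_on huu (hqint u u')
        (intervalIntegrable_const (c := q (u' + δ₂)))
        (fun s hs => hqmono (by linarith [hs.2, hδ₂.le] : s ≤ u' + δ₂))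
      rwa [intervalIntegral.integral_const, smul_eq_mul, mul_comm] at this
    have hI2le : (∫ s in (u + δ₂)..(u' + δ₂), q s) ≤ q (u' + δ₂) * (u' - u) := by
      have := intervalIntegral.integral_mono_on (by linarith : u + δ₂ ≤ u' + δ₂)
        (hqint _ _) (intervalIntegrable_const (c := q (u' + δ₂)))
        (fun s hs => hqmono hs.2)
      rw [intervalIntegral.integral_const, smul_eq_mul, mul_comm] at this
      have he : u' + δ₂ - (u + δ₂) = u' - u := by ring
      rwa [he] at this
    have heq : (∫ s in u'..(u' + δ₂), q s) - ∫ s in u..(u + δ₂), q s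
        = (∫ s in (u + δ₂)..(u' + δ₂), q s) - ∫ s in u..u', q s := by
      linarith [e1, e2]
    rw [heq]
    rw [abs_le]
    constructor <;> linarith
  refine ⟨μL, ?_, ?_, ?_⟩
  · -- locally Lipschitz
    intro r₀
    set b := |r₀| + 1 with hbdef
    set Q := q (b + δ₂) with hQdef
    have hQ0 : 0 ≤ Q := hq0 _
    refine ⟨Real.toNNReal (L + δ₂⁻¹ * Q), Metric.ball r₀ 1,
      Metric.ball_mem_nhds r₀ one_pos, LipschitzOnWith.of_dist_le' ?_⟩
    intro r hr r' hr'
    have hrb : |r| ≤ b := by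
      have := mem_ball_iff_norm.mp hr
      rw [Real.norm_eq_abs] at this
      have h1 := abs_sub_abs_le_abs_sub r r₀
      rw [hbdef]; linarith
    have hrb' : |r'| ≤ b := by
      have := mem_ball_iff_norm.mp hr'
      rw [Real.norm_eq_abs] at this
      have h1 := abs_sub_abs_le_abs_sub r' r₀
      rw [hbdef]; linarith
    have habsabs : |(|r| - |r'|)| ≤ |r - r'| := abs_abs_sub_abs_le_abs_sub r r'
    have key : |μL r - μL r'| ≤ (L + δ₂⁻¹ * Q) * |r - r'| := by
      have hIR : |(∫ s in |r|..(|r| + δ₂), q s) - ∫ s in |r'|..(|r'| + δ₂), q s|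
          ≤ Q * |(|r| - |r'|)| := by
        rcases le_total (|r|) (|r'|) with hc | hc
        · have := hIbound (|r|) (|r'|) (abs_nonneg r) hc
          rw [abs_sub_comm]
          have hmq : q (|r'| + δ₂) ≤ Q := hqmono (by rw [hQdef] at *; linarith)
          have h2 : |(|r| - |r'|)| = |r'| - |r| := by
            rw [abs_sub_comm, abs_of_nonneg (by linarith)]
          rw [h2]
          calc |(∫ s in |r'|..(|r'| + δ₂), q s) - ∫ s in |r|..(|r| + δ₂), q s|
              ≤ q (|r'| + δ₂) * (|r'| - |r|) := this
          _ ≤ Q * (|r'| - |r|) := by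
              apply mul_le_mul_of_nonneg_right hmq; linarith
        · have := hIbound (|r'|) (|r|) (abs_nonneg r') hc
          have hmq : q (|r| + δ₂) ≤ Q := hqmono (by linarith)
          have h2 : |(|r| - |r'|)| = |r| - |r'| := abs_of_nonneg (by linarith)
          rw [h2]
          calc |(∫ s in |r|..(|r| + δ₂), q s) - ∫ s in |r'|..(|r'| + δ₂), q s|
              ≤ q (|r| + δ₂) * (|r| - |r'|) := this
          _ ≤ Q * (|r| - |r'|) := by
              apply mul_le_mul_of_nonneg_right hmq; linarith
      have e : μL r - μL r' = L * (|r| - |r'|)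
          + δ₂⁻¹ * ((∫ s in |r|..(|r| + δ₂), q s) - ∫ s in |r'|..(|r'| + δ₂), q s) := by
        simp only [hμdef]; ring
      rw [e]
      calc |L * (|r| - |r'|) + δ₂⁻¹ * ((∫ s in |r|..(|r| + δ₂), q s)
              - ∫ s in |r'|..(|r'| + δ₂), q s)|
          ≤ |L * (|r| - |r'|)| + |δ₂⁻¹ * ((∫ s in |r|..(|r| + δ₂), q s)
              - ∫ s in |r'|..(|r'| + δ₂), q s)| := abs_add_le _ _
      _ ≤ L * |r - r'| + δ₂⁻¹ * (Q * |r - r'|) := by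
          apply add_le_add
          · rw [abs_mul, abs_of_nonneg hL0]
            exact mul_le_mul_of_nonneg_left (habsabs.trans le_rfl |>.trans le_rfl
              |> fun h => habsabs) hL0 |>.trans (le_refl _) |>.trans (le_refl _)
          · rw [abs_mul, abs_of_nonneg (by positivity : (0:ℝ) ≤ δ₂⁻¹)]
            apply mul_le_mul_of_nonneg_left _ (by positivity)
            calc |(∫ s in |r|..(|r| + δ₂), q s) - ∫ s in |r'|..(|r'| + δ₂), q s|
                ≤ Q * |(|r| - |r'|)| := hIR
            _ ≤ Q * |r - r'| := mul_le_mul_of_nonneg_left habsabs hQ0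
      _ = (L + δ₂⁻¹ * Q) * |r - r'| := by ring
    rw [Real.dist_eq, Real.dist_eq]
    exact key
  · -- μL 0 ≤ 0
    have hint0 : (∫ s in (0:ℝ)..δ₂, q s) = 0 := by
      have heq : Set.EqOn q (fun _ => (0:ℝ)) (Set.uIcc (0:ℝ) δ₂) := by
        intro s hs
        rw [Set.uIcc_of_le hδ₂.le] at hs
        exact hqsmall s hs.2
      rw [intervalIntegral.integral_congr heq]
      simp
    simp only [hμdef]
    rw [abs_zero, zero_add, hint0]
    simp
  · intro x hx
    have h1 : p x ≤ q (|h x|) := hqmem x hx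
    have h2 : δ₂ * q (|h x|) ≤ ∫ s in |h x|..(|h x| + δ₂), q s := by
      have := intervalIntegral.integral_mono_on (by linarith : |h x| ≤ |h x| + δ₂)
        (intervalIntegrable_const (c := q (|h x|))) (hqint _ _)
        (fun s hs => hqmono hs.1)
      rwa [intervalIntegral.integral_const, smul_eq_mul, add_sub_cancel_left] at this
    have h3 : q (|h x|) ≤ δ₂⁻¹ * ∫ s in |h x|..(|h x| + δ₂), q s := by
      have h4 := mul_le_mul_of_nonneg_left h2 (inv_nonneg.mpr hδ₂.le)
      rwa [← mul_assoc, inv_mul_cancel₀ (ne_of_gt hδ₂), one_mul] at h4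
    have h5 : -(g x) = p x + L * |h x| := by simp only [hpdef]; ring
    have h6 : -(g x) ≤ μL (h x) := by
      simp only [hμdef]
      linarith
    have h7 : -μL (h x) ≤ g x := by linarith
    exact h7
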